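/- Over F_2, for the clique of size n with δ_s = 1, the optimal ICSIE codelength is the minimum N satisfying 2^{N−1} ≥ n. In particular, the maximum number of vectors in F_2^N (N ≥ 3) any 3 of which are linearly independent equals 2^{N−1}, achieved by the set of all odd-weight vectors. -/

import Mathlib

open Finset

noncomputable def par {N : ℕ} (v : Fin N → ZMod 2) : ZMod 2 := ∑ i, v i

lemma zmod2_ne_zero : ∀ {a : ZMod 2}, a ≠ 0 → a = 1 := by decide

lemma zmod2_add_eq_zero : ∀ a b : ZMod 2, a + b = 0 → a = b := by decide

lemma pi_add_self {N : ℕ} (w : Fin N → ZMod 2) : w + w = 0 := by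
  funext i
  show w i + w i = 0
  generalize w i = c; revert c; decide

lemma par_eq_card {N : ℕ} (v : Fin N → ZMod 2) :
    par v = ((Finset.univ.filter (fun i => v i ≠ 0)).card : ZMod 2) := by
  unfold par
  rw [← Finset.sum_filter_ne_zero]
  rw [Finset.sum_congr rfl (fun i hi => zmod2_ne_zero (Finset.mem_filter.mp hi).2)]
  simp

lemma natCast_zmod2_one_iff (m : ℕ) : (m : ZMod 2) = 1 ↔ m % 2 = 1 := by
  rw [← ZMod.natCast_mod m 2]
  rcases Nat.mod_two_eq_zero_or_one m with h | h <;> rw [h] <;> simp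

lemma hammingNorm_odd_iff {N : ℕ} (v : Fin N → ZMod 2) :
    hammingNorm v % 2 = 1 ↔ par v = 1 := by
  rw [par_eq_card, natCast_zmod2_one_iff]
  rfl

lemma par_sum {N : ℕ} (B : Finset (Fin N → ZMod 2)) :
    par (∑ v ∈ B, v) = ∑ v ∈ B, par v := by
  unfold par
  rw [Finset.sum_comm]
  simp [Finset.sum_apply]

/-- `Cap3 S`: no nonempty subset of size ≤ 3 sums to zero. -/
def Cap3 {N : ℕ} (S : Finset (Fin N → ZMod 2)) : Prop :=
  ∀ B ⊆ S, B.Nonempty → B.card ≤ 3 → ∑ v ∈ B, v ≠ 0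

lemma cap3_mono {N : ℕ} {S T : Finset (Fin N → ZMod 2)} (h : T ⊆ S) (hS : Cap3 S) :
    Cap3 T := fun B hB => hS B (hB.trans h)

lemma odd_cap3 {N : ℕ} : Cap3 (Finset.univ.filter (fun v : Fin N → ZMod 2 => par v = 1)) := by
  intro B hB hne hcard h0
  have hpar : ∀ v ∈ B, par v = 1 := fun v hv => (Finset.mem_filter.mp (hB hv)).2
  have hsum : par (∑ v ∈ B, v) = (B.card : ZMod 2) := by
    rw [par_sum, Finset.sum_congr rfl hpar]; simp
  rw [h0] at hsum
  have hpar0 : par (0 : Fin N → ZMod 2) = 0 := by simp [par]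
  rw [hpar0] at hsum
  -- so card ≡ 0 mod 2, card ∈ {1,2,3} nonzero → card = 2
  interval_cases hc : B.card
  · exact hne.card_pos.ne' hc
  · simp at hsum
  · -- card = 2 : B = {a,b}, a + b = 0 → a = b contradiction
    obtain ⟨a, b, hab, rfl⟩ := Finset.card_eq_two.mp hc
    rw [Finset.sum_pair hab] at h0
    apply hab
    funext i
    have := congrFun h0 i
    simp [Pi.add_apply] at this
    exact zmod2_add_eq_zero _ _ this
  · revert hsum; decide

lemma cap3_card_le {N : ℕ} (S : Finset (Fin N → ZMod 2)) (hS : Cap3 S) :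
    2 * S.card ≤ 2 ^ N := by
  rcases S.eq_empty_or_nonempty with rfl | hSne
  · simp
  obtain ⟨a, ha⟩ := hSne
  have h0 : (0 : Fin N → ZMod 2) ∉ S := by
    intro h
    exact hS {0} (Finset.singleton_subset_iff.mpr h) ⟨0, Finset.mem_singleton_self 0⟩
      (by simp) (by simp)
  have hdisj : Disjoint S (S.image (fun x => a + x)) := by
    rw [Finset.disjoint_right]
    intro y hy hyS
    obtain ⟨x, hx, rfl⟩ := Finset.mem_image.mp hy
    by_cases hxa : x = a
    · subst hxa
      rw [pi_add_self] at hyS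
      exact h0 hyS
    by_cases hax0 : a + x = a
    · rw [add_eq_left.mp hax0] at hx; exact h0 hx
    by_cases hax1 : a + x = x
    · rw [add_eq_right.mp hax1] at ha; exact h0 ha
    · have hmem : a ∉ ({x, a + x} : Finset _) := by
        simp only [Finset.mem_insert, Finset.mem_singleton]
        push_neg
        exact ⟨Ne.symm hxa, fun h => hax0 h.symm⟩
      refine hS {a, x, a + x} ?_ ⟨a, by simp⟩ ?_ ?_
      · intro v hv
        simp only [Finset.mem_insert, Finset.mem_singleton] at hv
        rcases hv with rfl | rfl | rfl <;> assumption
      · refine le_trans (Finset.card_insert_le _ _) (Nat.succ_le_succ ?_)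
        exact le_trans (Finset.card_insert_le _ _) (by simp)
      · rw [Finset.sum_insert hmem, Finset.sum_pair (fun h => hax1 h.symm)]
        have : a + (x + (a + x)) = (a + a) + (x + x) := by ring
        rw [this, pi_add_self, pi_add_self, add_zero]
  have hle : (S ∪ S.image (fun x => a + x)).card ≤ Fintype.card (Fin N → ZMod 2) :=
    Finset.card_le_univ _
  rw [Finset.card_union_of_disjoint hdisj,
    Finset.card_image_of_injective _ (add_right_injective a)] at hle
  have hcard : Fintype.card (Fin N → ZMod 2) = 2 ^ N := by
    simp [Fintype.card_fun]
  omega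

lemma par_update {N : ℕ} (hN : 0 < N) (v : Fin N → ZMod 2) :
    par (Function.update v ⟨0, hN⟩ (v ⟨0, hN⟩ + 1)) = par v + 1 := by
  unfold par
  rw [Finset.sum_update_of_mem (Finset.mem_univ _), Finset.sdiff_singleton_eq_erase]
  rw [show (∑ i, v i) = v ⟨0, hN⟩ + ∑ i ∈ Finset.univ.erase ⟨0, hN⟩, v i from
    (Finset.add_sum_erase _ _ (Finset.mem_univ _)).symm]
  ring

lemma zmod2_add_one_ne (a : ZMod 2) : ¬ (a + 1 = a) := by revert a; decide

lemma odd_card {N : ℕ} (hN : 0 < N) :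
    (Finset.univ.filter (fun v : Fin N → ZMod 2 => par v = 1)).card = 2 ^ (N - 1) := by
  set flip : (Fin N → ZMod 2) → (Fin N → ZMod 2) :=
    fun v => Function.update v ⟨0, hN⟩ (v ⟨0, hN⟩ + 1) with hflip
  have flip_par : ∀ v, par (flip v) = par v + 1 := fun v => par_update hN v
  have flip_inv : ∀ v, flip (flip v) = v := by
    intro v
    rw [hflip]
    simp only [Function.update_self, Function.update_idem]
    have : v ⟨0, hN⟩ + 1 + 1 = v ⟨0, hN⟩ := by
      generalize v ⟨0, hN⟩ = c; revert c; decide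
    rw [this, Function.update_eq_self]
  have key : (Finset.univ.filter (fun v : Fin N → ZMod 2 => par v = 1)).card
      = (Finset.univ.filter (fun v : Fin N → ZMod 2 => ¬ par v = 1)).card := by
    apply Finset.card_nbij' flip flip
    · intro v hv
      simp only [Finset.mem_coe, Finset.mem_filter, Finset.mem_univ, true_and] at hv ⊢
      rw [flip_par, hv]; decide
    · intro v hv
      simp only [Finset.mem_coe, Finset.mem_filter, Finset.mem_univ, true_and] at hv ⊢
      rw [flip_par]
      have h0 : par v = 0 := by
        rcases (by revert hv; generalize par v = c; revert c; decide :
          par v = 0) with h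
        exact h
      rw [h0]; decide
    · exact fun v _ => flip_inv v
    · exact fun v _ => flip_inv v
  have total := Finset.card_filter_add_card_filter_not
    (s := (Finset.univ : Finset (Fin N → ZMod 2))) (p := fun v => par v = 1)
  rw [← key] at total
  have huniv : (Finset.univ : Finset (Fin N → ZMod 2)).card = 2 ^ N := by
    simp [Fintype.card_fun]
  rw [huniv] at total
  have h2 : 2 ^ N = 2 * 2 ^ (N - 1) := by
    rw [← pow_succ']
    congr 1
    omega
  omega

lemma cap3_linearIndependent {N : ℕ} (T : Finset (Fin N → ZMod 2)) (hT : Cap3 T)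
    (hc : T.card ≤ 3) :
    LinearIndependent (ZMod 2) (fun v : {x // x ∈ T} => v.1) := by
  rw [Fintype.linearIndependent_iff]
  intro g hg
  by_contra hcon
  push_neg at hcon
  obtain ⟨i, hgi⟩ := hcon
  set A : Finset {x // x ∈ T} := Finset.univ.filter (fun j => g j ≠ 0) with hA
  have hiA : i ∈ A := by simp [hA, hgi]
  have hsumA : ∑ j ∈ A, (j : Fin N → ZMod 2) = 0 := by
    rw [← hg]
    rw [← Finset.sum_filter_of_ne (p := fun j => g j ≠ 0)
      (f := fun j => g j • (j : Fin N → ZMod 2)) (by intro x _ hx hgx; exact absurd (by simp [hgx]) hx)]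
    apply Finset.sum_congr rfl
    intro j hj
    rw [zmod2_ne_zero (Finset.mem_filter.mp hj).2, one_smul]
  set B : Finset (Fin N → ZMod 2) := A.image Subtype.val with hB
  have hBT : B ⊆ T := by
    intro v hv
    obtain ⟨j, _, rfl⟩ := Finset.mem_image.mp hv
    exact j.2
  have hBne : B.Nonempty := ⟨i.1, Finset.mem_image_of_mem _ hiA⟩
  have hBc : B.card ≤ 3 := by
    rw [hB, Finset.card_image_of_injective _ Subtype.coe_injective]
    calc A.card ≤ Finset.univ.card := Finset.card_le_univ _
    _ = T.card := by simp
    _ ≤ 3 := hc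
  have hBsum : ∑ v ∈ B, v = 0 := by
    rw [hB, Finset.sum_image (fun x _ y _ h => Subtype.coe_injective h)]
    exact hsumA
  exact hT B hBT hBne hBc hBsum

lemma linearIndependent_cap3 {N : ℕ} (S : Finset (Fin N → ZMod 2))
    (h : ∀ T ⊆ S, T.card ≤ 3 →
      LinearIndependent (ZMod 2) (fun v : {x // x ∈ T} => v.1)) :
    Cap3 S := by
  intro B hBS hBne hBc h0
  have hli := h B hBS hBc
  rw [Fintype.linearIndependent_iff] at hli
  obtain ⟨b, hb⟩ := hBne
  have := hli (fun _ => 1) ?_ ⟨b, hb⟩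
  · exact one_ne_zero this
  · rw [show (∑ j : {x // x ∈ B}, (1 : ZMod 2) • (j : Fin N → ZMod 2))
      = ∑ v ∈ B, v from by
        simp only [one_smul]
        rw [Finset.univ_eq_attach]
        exact Finset.sum_attach B (fun v => v)]
    exact h0

lemma cond_iff {n : ℕ} (z : Fin n → ZMod 2) :
    (∃ i : Fin n, z i ≠ 0 ∧
      ((Finset.univ.erase i).filter (fun j => z j ≠ 0)).card ≤ 2)
    ↔ ((Finset.univ.filter (fun i => z i ≠ 0)).Nonempty ∧
      (Finset.univ.filter (fun i => z i ≠ 0)).card ≤ 3) := by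
  constructor
  · rintro ⟨i, hi, hc⟩
    have hiI : i ∈ Finset.univ.filter (fun i => z i ≠ 0) := by
      simp [hi]
    refine ⟨⟨i, hiI⟩, ?_⟩
    rw [Finset.filter_erase, Finset.card_erase_of_mem hiI] at hc
    have := Finset.card_pos.mpr ⟨i, hiI⟩
    omega
  · rintro ⟨⟨i, hiI⟩, hc⟩
    refine ⟨i, (Finset.mem_filter.mp hiI).2, ?_⟩
    rw [Finset.filter_erase, Finset.card_erase_of_mem hiI]
    omega

lemma vecMul_eq_sum {n N : ℕ} (z : Fin n → ZMod 2) (G : Matrix (Fin n) (Fin N) (ZMod 2)) :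
    Matrix.vecMul z G = ∑ i ∈ Finset.univ.filter (fun i => z i ≠ 0), G i := by
  funext j
  refine Eq.trans ?_ (Finset.sum_apply (M := fun _ => ZMod 2) j (Finset.univ.filter (fun i => z i ≠ 0)) (fun i => (G i : Fin N → ZMod 2))).symm
  show (Matrix.vecMul z G) j = _
  rw [show (Matrix.vecMul z G) j = ∑ i, z i * G i j from rfl]
  rw [← Finset.sum_filter_of_ne (p := fun i => z i ≠ 0)
    (f := fun i => z i * G i j)
    (by intro x _ hx hzx; exact absurd (by simp [hzx]) hx)]
  apply Finset.sum_congr rfl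
  intro i hi
  rw [zmod2_ne_zero (Finset.mem_filter.mp hi).2, one_mul]

lemma indicator_filter {n : ℕ} (I : Finset (Fin n)) :
    Finset.univ.filter (fun i => (if i ∈ I then (1 : ZMod 2) else 0) ≠ 0) = I := by
  ext i
  simp only [Finset.mem_filter, Finset.mem_univ, true_and]
  split <;> simp_all

lemma exists_G_of_le {n N' : ℕ} (hn : 3 < n) (h : n ≤ 2 ^ (N' - 1)) :
    ∃ G : Matrix (Fin n) (Fin N') (ZMod 2),
      ∀ z : Fin n → ZMod 2,
        (∃ i : Fin n, z i ≠ 0 ∧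
          ((Finset.univ.erase i).filter (fun j => z j ≠ 0)).card ≤ 2) →
        Matrix.vecMul z G ≠ 0 := by
  have hN' : 0 < N' := by
    rcases Nat.eq_zero_or_pos N' with rfl | h'
    · simp at h; omega
    · exact h'
  set oddS := Finset.univ.filter (fun v : Fin N' → ZMod 2 => par v = 1) with hoddS
  have hcard : Fintype.card (Fin n) ≤ Fintype.card {x // x ∈ oddS} := by
    rw [Fintype.card_coe, Fintype.card_fin, hoddS, odd_card hN']
    exact h
  obtain ⟨e⟩ := Function.Embedding.nonempty_of_card_le hcard
  refine ⟨Matrix.of (fun i => (e i).1), ?_⟩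
  intro z hz h0
  rw [cond_iff] at hz
  obtain ⟨hne, hc⟩ := hz
  set I := Finset.univ.filter (fun i => z i ≠ 0) with hI
  rw [vecMul_eq_sum] at h0
  have hinj : Function.Injective (fun i : Fin n => (e i).1) :=
    fun a b hab => e.injective (Subtype.coe_injective hab)
  set B := I.image (fun i => (e i).1) with hB
  refine odd_cap3 B ?_ ?_ ?_ ?_
  · intro v hv
    obtain ⟨i, _, rfl⟩ := Finset.mem_image.mp hv
    exact (e i).2
  · obtain ⟨i, hi⟩ := hne
    exact ⟨(e i).1, Finset.mem_image_of_mem _ hi⟩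
  · rw [hB, Finset.card_image_of_injective _ hinj]
    exact hc
  · rw [hB, Finset.sum_image (fun a _ b _ hab => hinj hab)]
    exact h0

lemma le_of_exists_G {n N' : ℕ} (hn : 3 < n)
    (h : ∃ G : Matrix (Fin n) (Fin N') (ZMod 2),
      ∀ z : Fin n → ZMod 2,
        (∃ i : Fin n, z i ≠ 0 ∧
          ((Finset.univ.erase i).filter (fun j => z j ≠ 0)).card ≤ 2) →
        Matrix.vecMul z G ≠ 0) : n ≤ 2 ^ (N' - 1) := by
  obtain ⟨G, hG⟩ := h
  set r : Fin n → (Fin N' → ZMod 2) := fun i => G i with hr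
  have hinj : Function.Injective r := by
    intro i j hij
    by_contra hne
    apply hG (fun k => if k ∈ ({i, j} : Finset (Fin n)) then (1 : ZMod 2) else 0)
    · rw [cond_iff, indicator_filter]
      refine ⟨⟨i, by simp⟩, ?_⟩
      exact le_trans (Finset.card_insert_le _ _) (by simp)
    · rw [vecMul_eq_sum, indicator_filter]
      refine (Finset.sum_pair hne).trans ?_
      show r i + r j = 0
      rw [hij, pi_add_self]
  have hcap : Cap3 (Finset.univ.image r) := by
    intro B hBS hBne hBc h0
    set I := Finset.univ.filter (fun i => r i ∈ B) with hI
    have hIB : I.image r = B := by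
      ext v
      simp only [Finset.mem_image, hI, Finset.mem_filter, Finset.mem_univ, true_and]
      constructor
      · rintro ⟨i, hi, rfl⟩; exact hi
      · intro hv
        obtain ⟨i, _, rfl⟩ := Finset.mem_image.mp (hBS hv)
        exact ⟨i, hv, rfl⟩
    have hIcard : I.card = B.card := by
      rw [← hIB, Finset.card_image_of_injective _ hinj]
    apply hG (fun k => if k ∈ I then (1 : ZMod 2) else 0)
    · rw [cond_iff, indicator_filter]
      constructor
      · obtain ⟨v, hv⟩ := hBne
        obtain ⟨i, _, rfl⟩ := Finset.mem_image.mp (hBS hv)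
        exact ⟨i, Finset.mem_filter.mpr ⟨Finset.mem_univ _, hv⟩⟩
      · omega
    · rw [vecMul_eq_sum, indicator_filter]
      rw [show (∑ i ∈ I, G i) = ∑ i ∈ I, r i from rfl]
      rw [← hIB, Finset.sum_image (fun a _ b _ hab => hinj hab)] at h0
      exact h0
  have hb := cap3_card_le _ hcap
  rw [Finset.card_image_of_injective _ hinj, Finset.card_univ, Fintype.card_fin] at hb
  rcases N' with _ | M
  · simp at hb; omega
  · have : 2 ^ (M + 1) = 2 * 2 ^ M := by rw [pow_succ]; ring
    simp only [Nat.add_sub_cancel]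
    omega



/-- Over `F_2`, for the clique of size `n` with `δs = 1`, the
optimal ICSIE codelength is the minimum `N` with `2^{N-1} ≥ n`. Moreover, the
maximum number of vectors in `F_2^N` (`N ≥ 3`) any 3 of which are linearly
independent equals `2^{N-1}`, achieved by the set of odd-weight vectors. -/
theorem stmt12 (n : ℕ) (hn : 3 < n) (N : ℕ) (hN : 3 ≤ N) :
    sInf {N' : ℕ | ∃ G : Matrix (Fin n) (Fin N') (ZMod 2),
        ∀ z : Fin n → ZMod 2,
          (∃ i : Fin n, z i ≠ 0 ∧
            ((Finset.univ.erase i).filter (fun j => z j ≠ 0)).card ≤ 2) →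
          Matrix.vecMul z G ≠ 0} = sInf {N' : ℕ | n ≤ 2 ^ (N' - 1)} ∧
    IsGreatest {k : ℕ | ∃ S : Finset (Fin N → ZMod 2), S.card = k ∧
        ∀ T ⊆ S, T.card ≤ 3 →
          LinearIndependent (ZMod 2) (fun v : {x // x ∈ T} => v.1)}
      (2 ^ (N - 1)) ∧
    ((Finset.univ.filter
        (fun v : Fin N → ZMod 2 => hammingNorm v % 2 = 1)).card = 2 ^ (N - 1) ∧
      ∀ T ⊆ Finset.univ.filter
          (fun v : Fin N → ZMod 2 => hammingNorm v % 2 = 1),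
        T.card ≤ 3 →
          LinearIndependent (ZMod 2) (fun v : {x // x ∈ T} => v.1)) := by
  have hN0 : 0 < N := by omega
  have hoddeq : (Finset.univ.filter (fun v : Fin N → ZMod 2 => hammingNorm v % 2 = 1))
      = Finset.univ.filter (fun v => par v = 1) :=
    Finset.filter_congr (fun v _ => hammingNorm_odd_iff v)
  have hcard3 : (Finset.univ.filter
      (fun v : Fin N → ZMod 2 => hammingNorm v % 2 = 1)).card = 2 ^ (N - 1) := by
    rw [hoddeq, odd_card hN0]
  have hli3 : ∀ T ⊆ Finset.univ.filter
      (fun v : Fin N → ZMod 2 => hammingNorm v % 2 = 1),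
      T.card ≤ 3 → LinearIndependent (ZMod 2) (fun v : {x // x ∈ T} => v.1) := by
    intro T hT hc
    exact cap3_linearIndependent T (cap3_mono (hoddeq ▸ hT) odd_cap3) hc
  refine ⟨?_, ⟨⟨_, hcard3, hli3⟩, ?_⟩, hcard3, hli3⟩
  · congr 1
    ext N'
    simp only [Set.mem_setOf_eq]
    exact ⟨fun h => le_of_exists_G hn h, fun h => exists_G_of_le hn h⟩
  · rintro k ⟨S, rfl, hS⟩
    have hb := cap3_card_le S (linearIndependent_cap3 S hS)
    obtain ⟨M, rfl⟩ : ∃ M, N = M + 1 := ⟨N - 1, by omega⟩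
    have h2 : 2 ^ (M + 1) = 2 * 2 ^ M := by rw [pow_succ]; ring
    simp only [Nat.add_sub_cancel]
    omega
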